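/- For every natural number N ≥ 1, there exists a Lebesgue measurable subset S of ℝ such that the Lebesgue measure of S ∩ [m, m+1] equals 1 − 1/N for every integer m, but there is no x ∈ S and no real number Δ > 0 such that x + nΔ ∈ S for all natural numbers n. -/

import Mathlib

open MeasureTheory
set_option maxHeartbeats 1000000


lemma aux_sqrt_mod (N P M i : ℕ) (hP : 1 ≤ P) (hN : 1 ≤ N) (hi : i < N) :
    ∃ k : ℕ, Nat.sqrt (M + k * P) % N = i := by
  set s : ℕ := i + N * (M + P + 1) with hs
  have hsmod : s % N = i := by
    rw [hs, Nat.add_mul_mod_self_left, Nat.mod_eq_of_lt hi]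
  have hmul : M + P + 1 ≤ N * (M + P + 1) := Nat.le_mul_of_pos_left _ (by omega)
  have hsP : P ≤ s := by omega
  have hsM : M ≤ s := by omega
  have hs1 : 1 ≤ s := by omega
  obtain ⟨Q, hQ⟩ : ∃ Q, s * s = Q := ⟨_, rfl⟩
  have hsQ : s ≤ Q := hQ ▸ Nat.le_mul_of_pos_left s (by omega)
  have hMQ : M ≤ Q := le_trans hsM hsQ
  have hex : ∃ j : ℕ, Q ≤ M + j * P := by
    refine ⟨Q, ?_⟩
    have : Q ≤ Q * P := Nat.le_mul_of_pos_right Q (by omega)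
    linarith
  set k := Nat.find hex with hkdef
  have h1 : Q ≤ M + k * P := Nat.find_spec hex
  have h2 : M + k * P < Q + P := by
    rcases Nat.eq_zero_or_pos k with hk0 | hk0
    · rw [hk0]; simpa using by omega
    · have hprev : ¬ Q ≤ M + (k - 1) * P := Nat.find_min hex (by omega)
      push_neg at hprev
      have hsub : (k - 1) * P + P = k * P := by
        have hkk : k - 1 + 1 = k := Nat.succ_pred_eq_of_pos hk0
        calc (k - 1) * P + P = ((k - 1) + 1) * P := by ring
        _ = k * P := by rw [hkk]
      linarith
  have hsq : Nat.sqrt (M + k * P) = s := by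
    have hsq2 : (s + 1) ^ 2 = s * s + 2 * s + 1 := by ring
    have ha : s ≤ Nat.sqrt (M + k * P) := Nat.le_sqrt'.mpr (by rw [pow_two]; omega)
    have hb : Nat.sqrt (M + k * P) < s + 1 := Nat.sqrt_lt'.mpr (by rw [hsq2]; omega)
    omega
  exact ⟨k, by rw [hsq, hsmod]⟩

/-- A rotation with small step (either slightly more than `0` or slightly less than `1`)
hits the arc `[0, ε)` within a bounded number of steps, uniformly in the start point. -/
lemma aux_hit (ε δ : ℝ) (hε0 : 0 < ε) (hε1 : ε ≤ 1) (hδ0 : 0 < δ) (hδ1 : δ < 1)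
    (hcase : δ < ε ∨ 1 - ε < δ) :
    ∃ K : ℕ, ∀ v : ℝ, 0 ≤ v → v < 1 → ∃ k ≤ K, Int.fract (v + k * δ) < ε := by
  rcases hcase with hc | hc
  · -- small positive step
    obtain ⟨K, hK⟩ := exists_nat_ge (1 / δ)
    have hKδ : 1 ≤ (K : ℝ) * δ := by
      rw [div_le_iff₀ hδ0] at hK; linarith
    refine ⟨K, fun v hv0 hv1 => ?_⟩
    have hex : ∃ k : ℕ, 1 ≤ v + k * δ := ⟨K, by linarith⟩
    set k := Nat.find hex with hkdef
    have h1 : 1 ≤ v + k * δ := Nat.find_spec hex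
    have hkK : k ≤ K := Nat.find_le (by linarith)
    have hk0 : k ≠ 0 := by
      intro h; rw [h] at h1; push_cast at h1; linarith
    have hprev : ¬ 1 ≤ v + (k - 1 : ℕ) * δ := Nat.find_min hex (by omega)
    have hcast : ((k - 1 : ℕ) : ℝ) = (k : ℝ) - 1 := by
      push_cast [Nat.cast_sub (Nat.one_le_iff_ne_zero.mpr hk0)]; ring
    rw [hcast] at hprev
    push_neg at hprev
    have hlt : v + k * δ < 1 + δ := by nlinarith
    refine ⟨k, hkK, ?_⟩
    have heq : v + k * δ = (v + k * δ - 1) + (1 : ℤ) := by push_cast; ring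
    rw [heq, Int.fract_add_intCast, Int.fract_eq_self.mpr ⟨by linarith, by linarith⟩]
    linarith
  · -- step slightly less than 1
    have hη : 0 < 1 - δ := by linarith
    obtain ⟨K, hK⟩ := exists_nat_ge (1 / (1 - δ))
    have hKη : 1 ≤ (K : ℝ) * (1 - δ) := by
      rw [div_le_iff₀ hη] at hK; linarith
    refine ⟨K, fun v hv0 hv1 => ?_⟩
    have hex : ∃ k : ℕ, v - k * (1 - δ) < ε := ⟨K, by nlinarith⟩
    set k := Nat.find hex with hkdef
    have h1 : v - k * (1 - δ) < ε := Nat.find_spec hex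
    have hkK : k ≤ K := Nat.find_le (by nlinarith)
    refine ⟨k, hkK, ?_⟩
    rcases Nat.eq_zero_or_pos k with hk0 | hk0
    · rw [hk0]
      push_cast
      rw [zero_mul, add_zero, Int.fract_eq_self.mpr ⟨hv0, hv1⟩]
      rw [hk0] at h1; push_cast at h1; linarith
    · have hprev : ¬ v - (k - 1 : ℕ) * (1 - δ) < ε := Nat.find_min hex (by omega)
      have hcast : ((k - 1 : ℕ) : ℝ) = (k : ℝ) - 1 := by
        push_cast [Nat.cast_sub hk0]; ring
      rw [hcast] at hprev
      push_neg at hprev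
      set w : ℝ := v - k * (1 - δ) with hw
      have hw0 : 0 ≤ w := by nlinarith
      have heq : v + k * δ = w + (k : ℤ) := by push_cast [hw]; ring
      rw [heq, Int.fract_add_intCast, Int.fract_eq_self.mpr ⟨hw0, by linarith⟩]
      exact h1

lemma aux_pigeon (N : ℕ) (hN : 1 ≤ N) (Δ : ℝ) (hΔ : Irrational Δ) :
    ∃ d : ℕ, 1 ≤ d ∧ 0 < Int.fract (d * Δ) ∧
      (Int.fract (d * Δ) < 1 / N ∨ 1 - 1 / N < Int.fract (d * Δ)) := by
  have hN0 : (0 : ℝ) < N := by exact_mod_cast hN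
  have h1N : (1 : ℝ) / N ≤ 1 := by rw [div_le_one hN0]; exact_mod_cast hN
  have hbox : ∀ a : ℕ, (⌊(N : ℝ) * Int.fract (a * Δ)⌋).toNat < N := by
    intro a
    have h0 : 0 ≤ (N : ℝ) * Int.fract (a * Δ) :=
      mul_nonneg (le_of_lt hN0) (Int.fract_nonneg _)
    have h1 : (N : ℝ) * Int.fract (a * Δ) < N := by
      have := Int.fract_lt_one ((a : ℝ) * Δ)
      nlinarith
    have hfl : ⌊(N : ℝ) * Int.fract (a * Δ)⌋ < (N : ℤ) :=
      Int.floor_lt.mpr (by exact_mod_cast h1)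
    have hfl0 : 0 ≤ ⌊(N : ℝ) * Int.fract (a * Δ)⌋ := Int.floor_nonneg.mpr h0
    omega
  let f : Fin (N + 1) → Fin N := fun a => ⟨(⌊(N : ℝ) * Int.fract ((a : ℕ) * Δ)⌋).toNat, hbox a⟩
  obtain ⟨a, b, hab, hfab⟩ := Fintype.exists_ne_map_eq_of_card_lt f (by simp)
  wlog hlt : (a : ℕ) < (b : ℕ) generalizing a b
  · exact this b a hab.symm hfab.symm (by omega)
  set d : ℕ := (b : ℕ) - (a : ℕ) with hd
  have hd1 : 1 ≤ d := by omega
  have hirr : Irrational ((d : ℝ) * Δ) := by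
    have hd0 : (d : ℚ) ≠ 0 := by exact_mod_cast Nat.one_le_iff_ne_zero.mp hd1
    simpa using hΔ.ratCast_mul hd0
  have hfne : Int.fract ((d : ℝ) * Δ) ≠ 0 := by
    intro h
    have heq : ((d : ℝ) * Δ) = (⌊(d : ℝ) * Δ⌋ : ℝ) := by
      have := Int.fract_add_floor ((d : ℝ) * Δ)
      rw [h] at this; linarith [this]
    exact hirr ⟨(⌊(d : ℝ) * Δ⌋ : ℚ), by push_cast; exact heq.symm⟩
  set u : ℝ := Int.fract ((a : ℕ) * Δ) with hu
  set w : ℝ := Int.fract ((b : ℕ) * Δ) with hwdef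
  have hflooreq : ⌊(N : ℝ) * u⌋ = ⌊(N : ℝ) * w⌋ := by
    have h1 : (⌊(N : ℝ) * u⌋).toNat = (⌊(N : ℝ) * w⌋).toNat := congrArg Fin.val hfab
    have h2 : 0 ≤ ⌊(N : ℝ) * u⌋ := Int.floor_nonneg.mpr
      (mul_nonneg (le_of_lt hN0) (Int.fract_nonneg _))
    have h3 : 0 ≤ ⌊(N : ℝ) * w⌋ := Int.floor_nonneg.mpr
      (mul_nonneg (le_of_lt hN0) (Int.fract_nonneg _))
    omega
  have hb1 := Int.floor_le ((N : ℝ) * u)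
  have hb2 := Int.lt_floor_add_one ((N : ℝ) * u)
  have hb3 := Int.floor_le ((N : ℝ) * w)
  have hb4 := Int.lt_floor_add_one ((N : ℝ) * w)
  rw [hflooreq] at hb1 hb2
  set r : ℝ := w - u with hr
  have hrup : r < 1 / N := by
    rw [lt_div_iff₀ hN0]; nlinarith
  have hrlow : -(1 / N) < r := by
    have : (u - w) * N < 1 := by nlinarith
    have h' : u - w < 1 / N := by rw [lt_div_iff₀ hN0]; linarith [this]
    linarith
  have hfr : Int.fract ((d : ℝ) * Δ) = Int.fract r := by
    rw [Int.fract_eq_fract]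
    refine ⟨⌊((b : ℕ) : ℝ) * Δ⌋ - ⌊((a : ℕ) : ℝ) * Δ⌋, ?_⟩
    have hdb : (d : ℝ) = ((b : ℕ) : ℝ) - ((a : ℕ) : ℝ) := by
      rw [hd]; push_cast [Nat.cast_sub (le_of_lt hlt)]; ring
    rw [hdb, hr, hu, hwdef]
    simp only [Int.fract]
    push_cast
    ring
  refine ⟨d, hd1, ?_, ?_⟩
  · rcases lt_or_ge (Int.fract ((d : ℝ) * Δ)) 0 with h | h
    · exact absurd h (not_lt.mpr (Int.fract_nonneg _))
    · exact lt_of_le_of_ne h (Ne.symm hfne)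
  · rcases le_or_gt 0 r with hr0 | hr0
    · left
      rw [hfr, Int.fract_eq_self.mpr ⟨hr0, by linarith⟩]
      exact hrup
    · right
      have hshift : Int.fract (r + (1 : ℝ)) = Int.fract r := by
        exact_mod_cast Int.fract_add_intCast r 1
      have hval : Int.fract r = r + 1 := by
        rw [← hshift, Int.fract_eq_self.mpr ⟨by linarith, by linarith⟩]
      rw [hfr, hval]
      linarith


theorem stmt_0 (N : ℕ) (hN : 1 ≤ N) :
    ∃ S : Set ℝ, MeasurableSet S ∧
      (∀ m : ℤ, volume (S ∩ Set.Icc (m : ℝ) ((m : ℝ) + 1)) =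
        ENNReal.ofReal (1 - 1 / N)) ∧
      ¬ ∃ x ∈ S, ∃ Δ : ℝ, 0 < Δ ∧ ∀ n : ℕ, x + (n : ℝ) * Δ ∈ S := by
  have hN0 : (0 : ℝ) < N := by exact_mod_cast hN
  set c : ℤ → ℕ := fun m => Nat.sqrt m.toNat % N with hc
  have hcN : ∀ m, c m < N := fun m => Nat.mod_lt _ (by omega)
  set T : Set ℝ := ⋃ m : ℤ, Set.Icc ((m : ℝ) + c m / N) ((m : ℝ) + c m / N + 1 / N) with hT
  have hcm0 : ∀ m : ℤ, (0 : ℝ) ≤ (c m : ℝ) / N := fun m => by positivity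
  have hcm1 : ∀ m : ℤ, (c m : ℝ) / N + 1 / N ≤ 1 := by
    intro m
    rw [← add_div, div_le_one hN0]
    exact_mod_cast hcN m
  refine ⟨Tᶜ, (MeasurableSet.iUnion fun m => measurableSet_Icc).compl, ?_, ?_⟩
  · intro m
    set H : Set ℝ := Set.Icc ((m : ℝ) + c m / N) ((m : ℝ) + c m / N + 1 / N) with hH
    have hHsub : H ⊆ Set.Icc (m : ℝ) (m + 1) :=
      Set.Icc_subset_Icc (by linarith [hcm0 m]) (by linarith [hcm1 m])
    have hvolH : volume H = ENNReal.ofReal (1 / N) := by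
      rw [hH, Real.volume_Icc]; ring_nf
    have hvolI : volume (Set.Icc (m : ℝ) (m + 1)) = ENNReal.ofReal 1 := by
      rw [Real.volume_Icc]; norm_num
    have hvolO : volume (Set.Ioo (m : ℝ) (m + 1)) = ENNReal.ofReal 1 := by
      rw [Real.volume_Ioo]; norm_num
    have hub : Tᶜ ∩ Set.Icc (m : ℝ) (m + 1) ⊆ Set.Icc (m : ℝ) (m + 1) \ H := by
      rintro y ⟨hyc, hyI⟩
      exact ⟨hyI, fun hyH => hyc (Set.mem_iUnion.mpr ⟨m, hyH⟩)⟩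
    have hlb : Set.Ioo (m : ℝ) (m + 1) \ H ⊆ Tᶜ ∩ Set.Icc (m : ℝ) (m + 1) := by
      rintro y ⟨hyO, hyH⟩
      refine ⟨fun hyT => ?_, Set.Ioo_subset_Icc_self hyO⟩
      obtain ⟨m', hym'⟩ := Set.mem_iUnion.mp hyT
      have h1 : (m' : ℝ) ≤ y := le_trans (by linarith [hcm0 m']) hym'.1
      have h2 : y ≤ (m' : ℝ) + 1 := le_trans hym'.2 (by linarith [hcm1 m'])
      have hmm : m' = m := by
        have ho1 := hyO.1
        have ho2 := hyO.2
        have e1 : (m' : ℝ) < (m : ℝ) + 1 := lt_of_le_of_lt h1 ho2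
        have e2 : (m : ℝ) < (m' : ℝ) + 1 := lt_of_lt_of_le ho1 h2
        have e1' : m' < m + 1 := by exact_mod_cast e1
        have e2' : m < m' + 1 := by exact_mod_cast e2
        omega
      rw [hmm] at hym'
      exact hyH hym'
    refine le_antisymm ?_ ?_
    · calc volume (Tᶜ ∩ Set.Icc (m : ℝ) (m + 1)) ≤ volume (Set.Icc (m : ℝ) (m + 1) \ H) :=
        measure_mono hub
      _ = volume (Set.Icc (m : ℝ) (m + 1)) - volume H :=
        measure_diff hHsub measurableSet_Icc.nullMeasurableSet (by
          rw [hvolH]; exact ENNReal.ofReal_ne_top)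
      _ = ENNReal.ofReal 1 - ENNReal.ofReal (1 / N) := by rw [hvolI, hvolH]
      _ = ENNReal.ofReal (1 - 1 / N) := (ENNReal.ofReal_sub 1 (by positivity)).symm
    · calc ENNReal.ofReal (1 - 1 / N) = ENNReal.ofReal 1 - ENNReal.ofReal (1 / N) :=
        ENNReal.ofReal_sub 1 (by positivity)
      _ = volume (Set.Ioo (m : ℝ) (m + 1)) - volume H := by rw [hvolO, hvolH]
      _ ≤ volume (Set.Ioo (m : ℝ) (m + 1) \ H) := le_measure_diff
      _ ≤ volume (Tᶜ ∩ Set.Icc (m : ℝ) (m + 1)) := measure_mono hlb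
  · rintro ⟨x, hxS, Δ, hΔ0, hAP⟩
    have key : ∀ n : ℕ, (c ⌊x + (n : ℝ) * Δ⌋ : ℝ) / N ≤ Int.fract (x + (n : ℝ) * Δ) →
        Int.fract (x + (n : ℝ) * Δ) ≤ (c ⌊x + (n : ℝ) * Δ⌋ : ℝ) / N + 1 / N → False := by
      intro n hl hr
      have hy : (⌊x + (n : ℝ) * Δ⌋ : ℝ) + Int.fract (x + (n : ℝ) * Δ) = x + (n : ℝ) * Δ :=
        Int.floor_add_fract _
      exact (hAP n) (Set.mem_iUnion.mpr ⟨⌊x + (n : ℝ) * Δ⌋, ⟨by linarith, by linarith⟩⟩)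
    by_cases hirr : Irrational Δ
    · -- irrational gap
      obtain ⟨d, hd1, hδ0, hcase⟩ := aux_pigeon N hN Δ hirr
      set δ := Int.fract ((d : ℝ) * Δ) with hδ
      have hδ1 : δ < 1 := Int.fract_lt_one _
      have h1N0 : (0 : ℝ) < 1 / N := by positivity
      have h1N1 : (1 : ℝ) / N ≤ 1 := by rw [div_le_one hN0]; exact_mod_cast hN
      obtain ⟨K, hK⟩ := aux_hit (1 / N) δ h1N0 h1N1 hδ0 hδ1 hcase
      obtain ⟨j, hj⟩ := exists_nat_ge (max (max 1 (x + 1)) (((K : ℝ) * d + 1) * Δ))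
      have hj1 : (1 : ℝ) ≤ j := le_trans (le_max_of_le_left (le_max_left _ _)) hj
      have hjx : x + 1 ≤ j := le_trans (le_max_of_le_left (le_max_right _ _)) hj
      have hjD : ((K : ℝ) * d + 1) * Δ ≤ j := le_trans (le_max_right _ _) hj
      set s : ℕ := N * j with hs
      have hjs : (j : ℝ) ≤ s := by
        have : j ≤ s := Nat.le_mul_of_pos_left j (by omega)
        exact_mod_cast this
      have hs1 : (1 : ℝ) ≤ s := le_trans hj1 hjs
      have hss : (s : ℝ) ≤ (s : ℝ) * s := by nlinarith
      have hex0 : ∃ n : ℕ, (s : ℝ) * s ≤ x + (n : ℝ) * Δ := by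
        obtain ⟨n, hn⟩ := exists_nat_ge (((s : ℝ) * s - x) / Δ)
        refine ⟨n, ?_⟩
        rw [div_le_iff₀ hΔ0] at hn
        linarith
      set n₀ := Nat.find hex0 with hn₀
      have h₀ : (s : ℝ) * s ≤ x + (n₀ : ℝ) * Δ := Nat.find_spec hex0
      have hn₀0 : n₀ ≠ 0 := by
        intro h
        rw [h] at h₀
        push_cast at h₀
        nlinarith [hjx, hjs]
      have hprev : ¬ (s : ℝ) * s ≤ x + ((n₀ - 1 : ℕ) : ℝ) * Δ := Nat.find_min hex0 (by omega)
      have hcast : ((n₀ - 1 : ℕ) : ℝ) = (n₀ : ℝ) - 1 := by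
        push_cast [Nat.cast_sub (by omega : 1 ≤ n₀)]; ring
      rw [hcast] at hprev
      push_neg at hprev
      have hupper0 : x + (n₀ : ℝ) * Δ < (s : ℝ) * s + Δ := by nlinarith [hprev]
      set v := Int.fract (x + (n₀ : ℝ) * Δ) with hv
      obtain ⟨k, hkK, hfr⟩ := hK v (Int.fract_nonneg _) (Int.fract_lt_one _)
      set n : ℕ := n₀ + k * d with hn
      have hfeq : Int.fract (x + (n : ℝ) * Δ) = Int.fract (v + k * δ) := by
        rw [Int.fract_eq_fract]
        refine ⟨⌊x + (n₀ : ℝ) * Δ⌋ + k * ⌊(d : ℝ) * Δ⌋, ?_⟩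
        rw [hv, hδ]
        simp only [Int.fract]
        push_cast [hn]
        ring
      have hnr : x + (n : ℝ) * Δ = x + (n₀ : ℝ) * Δ + (k : ℝ) * d * Δ := by
        push_cast [hn]; ring
      have hkd : (k : ℝ) * d * Δ ≤ (K : ℝ) * d * Δ := by
        have h1 : (k : ℝ) ≤ K := by exact_mod_cast hkK
        have h2 : (0 : ℝ) ≤ (d : ℝ) * Δ := by positivity
        nlinarith
      have hylt : x + (n : ℝ) * Δ < ((s : ℝ) + 1) * ((s : ℝ) + 1) := by
        have hDs : ((K : ℝ) * d + 1) * Δ ≤ s := le_trans hjD hjs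
        have hexp : ((K : ℝ) * d + 1) * Δ = (K : ℝ) * d * Δ + Δ := by ring
        have hstep : x + (n : ℝ) * Δ < (s : ℝ) * s + ((K : ℝ) * d + 1) * Δ := by
          rw [hnr, hexp]; linarith [hupper0, hkd]
        have hfin : ((s : ℝ) + 1) * ((s : ℝ) + 1) = (s : ℝ) * s + 2 * s + 1 := by ring
        linarith [hstep, hDs, hs1]
      have hyge : (s : ℝ) * s ≤ x + (n : ℝ) * Δ := by
        have : (0 : ℝ) ≤ (k : ℝ) * d * Δ := by positivity
        linarith [h₀, hnr.ge, hnr.le]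
      set m : ℤ := ⌊x + (n : ℝ) * Δ⌋ with hm
      have hm1 : ((s : ℤ) * s : ℤ) ≤ m := Int.le_floor.mpr (by push_cast; exact hyge)
      have hm2 : m < ((s : ℤ) + 1) * ((s : ℤ) + 1) :=
        Int.floor_lt.mpr (by push_cast; exact hylt)
      have hm0 : (0 : ℤ) ≤ m := le_trans (by positivity) hm1
      have hmt1 : (s * s : ℕ) ≤ m.toNat := by
        have h : ((s * s : ℕ) : ℤ) ≤ (m.toNat : ℤ) := by
          rw [Int.toNat_of_nonneg hm0]; push_cast; exact hm1
        exact_mod_cast h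
      have hmt2 : m.toNat < ((s + 1) * (s + 1) : ℕ) := by
        have h : (m.toNat : ℤ) < (((s + 1) * (s + 1) : ℕ) : ℤ) := by
          rw [Int.toNat_of_nonneg hm0]; push_cast; exact hm2
        exact_mod_cast h
      have hsqrt : Nat.sqrt m.toNat = s := by
        have ha : s ≤ Nat.sqrt m.toNat := Nat.le_sqrt'.mpr (by rw [pow_two]; exact hmt1)
        have hb : Nat.sqrt m.toNat < s + 1 := Nat.sqrt_lt'.mpr (by rw [pow_two]; exact hmt2)
        omega
      have hcm : c m = 0 := by
        simp only [hc, hsqrt, hs, Nat.mul_mod_right]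
      refine key n ?_ ?_
      · rw [← hm, hcm]
        simpa using Int.fract_nonneg _
      · rw [← hm, hcm, hfeq]
        push_cast
        rw [zero_div, zero_add]
        linarith [hfr]
    · -- rational gap
      obtain ⟨r, hrΔ⟩ := not_not.mp hirr
      have hr0 : 0 < r := by
        have : (0 : ℝ) < (r : ℝ) := by rw [hrΔ]; exact hΔ0
        exact_mod_cast this
      set p : ℕ := r.num.toNat with hp
      set q : ℕ := r.den with hq
      have hnum : (0 : ℤ) < r.num := Rat.num_pos.mpr hr0
      have hp1 : 1 ≤ p := by omega
      have hq1 : 1 ≤ q := r.pos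
      have hq0 : (q : ℝ) ≠ 0 := by positivity
      have hΔpq : Δ = (p : ℝ) / q := by
        rw [← hrΔ, Rat.cast_def]
        congr 1
        exact_mod_cast (Int.toNat_of_nonneg (le_of_lt hnum)).symm
      set k₀ : ℕ := ⌊x⌋.natAbs with hk₀
      have hM0 : (0 : ℤ) ≤ ⌊x⌋ + ((k₀ * p : ℕ) : ℤ) := by
        have h1 : (k₀ : ℤ) ≤ ((k₀ * p : ℕ) : ℤ) := by
          exact_mod_cast Nat.le_mul_of_pos_right k₀ (by omega)
        omega
      set M : ℕ := (⌊x⌋ + ((k₀ * p : ℕ) : ℤ)).toNat with hM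
      have hMeq : (M : ℤ) = ⌊x⌋ + ((k₀ * p : ℕ) : ℤ) := Int.toNat_of_nonneg hM0
      set t := Int.fract x with ht
      have ht0 : 0 ≤ t := Int.fract_nonneg x
      have ht1 : t < 1 := Int.fract_lt_one x
      have hfl0 : (0 : ℤ) ≤ ⌊(N : ℝ) * t⌋ := Int.floor_nonneg.mpr (by positivity)
      have hflN : ⌊(N : ℝ) * t⌋ < (N : ℤ) := Int.floor_lt.mpr (by push_cast; nlinarith)
      set i : ℕ := (⌊(N : ℝ) * t⌋).toNat with hi
      have hiN : i < N := by omega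
      have hieq : ((i : ℕ) : ℤ) = ⌊(N : ℝ) * t⌋ := Int.toNat_of_nonneg hfl0
      have hti1 : (i : ℝ) / N ≤ t := by
        rw [div_le_iff₀ hN0]
        have h1 : ((⌊(N : ℝ) * t⌋ : ℤ) : ℝ) ≤ (N : ℝ) * t := Int.floor_le _
        have h2 : ((i : ℕ) : ℝ) = ((⌊(N : ℝ) * t⌋ : ℤ) : ℝ) := by exact_mod_cast hieq
        rw [h2]; linarith [h1]
      have hti2 : t < ((i : ℝ) + 1) / N := by
        rw [lt_div_iff₀ hN0]
        have h1 : (N : ℝ) * t < ((⌊(N : ℝ) * t⌋ : ℤ) : ℝ) + 1 := Int.lt_floor_add_one _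
        have h2 : ((i : ℕ) : ℝ) = ((⌊(N : ℝ) * t⌋ : ℤ) : ℝ) := by exact_mod_cast hieq
        rw [h2]; linarith [h1]
      obtain ⟨k, hk⟩ := aux_sqrt_mod N p M i hp1 hN hiN
      set n : ℕ := q * (k₀ + k) with hn
      have hnΔ : x + (n : ℝ) * Δ = x + (((k₀ + k) * p : ℕ) : ℝ) := by
        rw [hΔpq, hn]
        push_cast
        field_simp
      have hfloor : ⌊x + (n : ℝ) * Δ⌋ = ((M + k * p : ℕ) : ℤ) := by
        rw [hnΔ, Int.floor_add_natCast]
        have h := hMeq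
        push_cast at h ⊢
        linear_combination -h
      have hfract : Int.fract (x + (n : ℝ) * Δ) = t := by
        rw [hnΔ, Int.fract_add_natCast]
      have hc' : c ⌊x + (n : ℝ) * Δ⌋ = i := by
        rw [hfloor]
        simp only [hc, Int.toNat_natCast]
        exact hk
      refine key n ?_ ?_
      · rw [hc', hfract]; exact hti1
      · rw [hc', hfract]
        have heq : ((i : ℝ) + 1) / N = (i : ℝ) / N + 1 / N := by ring
        linarith [hti2, heq.le]
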